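/- For every vertex v of the integer hull of {x ≥ 0 : Ax = b} with A ∈ ℤ^{m×n}, Δ = ‖A‖_∞, and s = |supp(v)|, one has s ≤ m·log₂(4.24·e·√s·Δ + 2e). -/

import Mathlib

open Matrix

/-- The integer hull of `{x ≥ 0 : Ax = b}`. -/
def integerHull {m n : ℕ} (A : Matrix (Fin m) (Fin n) ℤ) (b : Fin m → ℤ) :
    Set (Fin n → ℝ) :=
  convexHull ℝ
    {x | ∃ z : Fin n → ℤ, (∀ i, 0 ≤ z i) ∧ A.mulVec z = b ∧ x = fun i => (z i : ℝ)}

/-- `v` is a vertex of `P` if `v ∈ P` and `v` is not in the convex hull of `P \ {v}`. -/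
def IsVertex {n : ℕ} (P : Set (Fin n → ℝ)) (v : Fin n → ℝ) : Prop :=
  v ∈ P ∧ v ∉ convexHull ℝ (P \ {v})

namespace Stmt13Aux

lemma pow_self_le_exp_mul_factorial : ∀ m : ℕ, (m : ℝ) ^ m ≤ Real.exp m * m.factorial := by
  intro m
  induction m with
  | zero => simp
  | succ m ih =>
      have h1 : ((m + 1 : ℕ) : ℝ) ^ m ≤ Real.exp 1 * (m : ℝ) ^ m := by
        rcases Nat.eq_zero_or_pos m with hm | hm
        · subst hm; simpa using Real.one_le_exp (by norm_num)
        · have hmpos : (0 : ℝ) < m := by exact_mod_cast hm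
          have key : ((m + 1 : ℕ) : ℝ) ≤ (m : ℝ) * Real.exp (1 / m) := by
            have h := Real.add_one_le_exp (1 / (m : ℝ))
            have h2 := mul_le_mul_of_nonneg_left h (le_of_lt hmpos)
            calc ((m + 1 : ℕ) : ℝ) = (m : ℝ) * (1 / m + 1) := by field_simp; push_cast <;> ring
              _ ≤ (m : ℝ) * Real.exp (1 / m) := h2
          calc ((m + 1 : ℕ) : ℝ) ^ m ≤ ((m : ℝ) * Real.exp (1 / m)) ^ m := by
                apply pow_le_pow_left₀ (by positivity) key
            _ = (m : ℝ) ^ m * Real.exp (1 / m) ^ m := mul_pow _ _ _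
            _ = (m : ℝ) ^ m * Real.exp 1 := by
                rw [← Real.exp_nat_mul]
                congr 1
                field_simp
            _ = Real.exp 1 * (m : ℝ) ^ m := mul_comm _ _
      calc ((m + 1 : ℕ) : ℝ) ^ (m + 1) = ((m + 1 : ℕ) : ℝ) * ((m + 1 : ℕ) : ℝ) ^ m := by ring
        _ ≤ ((m + 1 : ℕ) : ℝ) * (Real.exp 1 * (m : ℝ) ^ m) := by
            apply mul_le_mul_of_nonneg_left h1 (by positivity)
        _ ≤ ((m + 1 : ℕ) : ℝ) * (Real.exp 1 * (Real.exp m * m.factorial)) := by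
            apply mul_le_mul_of_nonneg_left _ (by positivity)
            exact mul_le_mul_of_nonneg_left ih (le_of_lt (Real.exp_pos 1))
        _ = Real.exp (m + 1 : ℕ) * ((m + 1) * m.factorial : ℕ) := by
            push_cast
            rw [Real.exp_add]
            ring
        _ = Real.exp (m + 1 : ℕ) * (m + 1).factorial := by
            rw [Nat.factorial_succ]

lemma choose_le_pow_real (n m : ℕ) :
    (n.choose m : ℝ) ≤ (Real.exp 1 * n / m) ^ m := by
  rcases Nat.eq_zero_or_pos m with hm | hm
  · subst hm; simp
  have hmR : (0 : ℝ) < m := by exact_mod_cast hm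
  have hfac : (m.factorial : ℝ) * (n.choose m : ℝ) ≤ (n : ℝ) ^ m := by
    have h := Nat.descFactorial_le_pow n m
    rw [Nat.descFactorial_eq_factorial_mul_choose] at h
    exact_mod_cast h
  have hfacpos : (0 : ℝ) < m.factorial := by exact_mod_cast m.factorial_pos
  have h1 : (n.choose m : ℝ) ≤ (n : ℝ) ^ m / m.factorial := by
    rw [le_div_iff₀ hfacpos]
    linarith [hfac]
  have h2 : (m : ℝ) ^ m ≤ Real.exp m * m.factorial := pow_self_le_exp_mul_factorial m
  have h3 : (n : ℝ) ^ m / (m.factorial : ℝ) ≤ (Real.exp 1 * n / m) ^ m := by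
    rw [div_le_iff₀ hfacpos, div_pow, mul_pow, ← Real.exp_nat_mul, mul_one, div_mul_eq_mul_div,
      le_div_iff₀ (by positivity)]
    calc (n:ℝ)^m * (m:ℝ)^m ≤ (n:ℝ)^m * (Real.exp m * m.factorial) := by
          apply mul_le_mul_of_nonneg_left h2 (by positivity)
      _ = Real.exp m * (n:ℝ)^m * m.factorial := by ring
  linarith

lemma card_le_choose_of_sum_le {α : Type*} [DecidableEq α] (G : Finset α) (m L : ℕ)
    (U : α → (Fin m → ℕ)) (hinj : Set.InjOn U G)
    (hsum : ∀ T ∈ G, ∑ i, U T i ≤ L) :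
    G.card ≤ (L + m).choose m := by
  classical
  set q : (Fin m → ℕ) → Fin m → ℕ := fun u j => (∑ i ∈ Finset.Iic j, u i) + (j : ℕ) with hq
  have hqmono : ∀ u : Fin m → ℕ, StrictMono (q u) := by
    intro u j k hjk
    have h1 : (∑ i ∈ Finset.Iic j, u i) ≤ ∑ i ∈ Finset.Iic k, u i :=
      Finset.sum_le_sum_of_subset (Finset.Iic_subset_Iic.mpr hjk.le)
    have h2 : (j : ℕ) < (k : ℕ) := hjk
    simp only [hq]
    omega
  have hqrec : ∀ u u' : Fin m → ℕ, q u = q u' → u = u' := by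
    intro u u' h
    have hsums : ∀ j : Fin m, (∑ i ∈ Finset.Iic j, u i) = ∑ i ∈ Finset.Iic j, u' i := by
      intro j
      have := congrFun h j
      simp only [hq] at this
      omega
    have key : ∀ k : ℕ, ∀ j : Fin m, (j : ℕ) = k → u j = u' j := by
      intro k
      induction k using Nat.strong_induction_on with
      | _ k ihk =>
      intro j hjk
      have ih : ∀ i : Fin m, i < j → u i = u' i := by
        intro i hij
        exact ihk (i : ℕ) (by omega) i rfl
      have hsplit : ∀ w : Fin m → ℕ, (∑ i ∈ Finset.Iic j, w i) = w j + ∑ i ∈ Finset.Iio j, w i := by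
        intro w
        rw [← Finset.Iio_insert, Finset.sum_insert (by simp)]
      have hIio : (∑ i ∈ Finset.Iio j, u i) = ∑ i ∈ Finset.Iio j, u' i := by
        apply Finset.sum_congr rfl
        intro i hi
        exact ih i (Finset.mem_Iio.mp hi)
      have := hsums j
      rw [hsplit u, hsplit u'] at this
      omega
    funext j
    exact key (j : ℕ) j rfl
  set Ψ : α → Finset ℕ := fun T => Finset.image (q (U T)) Finset.univ with hΨ
  have hmem : ∀ T ∈ G, Ψ T ∈ Finset.powersetCard m (Finset.range (L + m)) := by
    intro T hT
    rw [Finset.mem_powersetCard]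
    constructor
    · intro x hx
      simp only [hΨ, Finset.mem_image] at hx
      obtain ⟨j, -, rfl⟩ := hx
      rw [Finset.mem_range]
      have h1 : (∑ i ∈ Finset.Iic j, U T i) ≤ ∑ i, U T i :=
        Finset.sum_le_sum_of_subset (Finset.subset_univ _)
      have h2 := hsum T hT
      have h3 : (j : ℕ) < m := j.isLt
      simp only [hq]
      omega
    · rw [Finset.card_image_of_injective _ (hqmono (U T)).injective, Finset.card_univ,
        Fintype.card_fin]
  have hinjΨ : Set.InjOn Ψ G := by
    intro T hT T' hT' hEq
    apply hinj hT hT'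
    apply hqrec
    have hcard : (Ψ T).card = m := by
      rw [hΨ]
      rw [Finset.card_image_of_injective _ (hqmono (U T)).injective, Finset.card_univ,
        Fintype.card_fin]
    have h1 : q (U T) = (Ψ T).orderEmbOfFin hcard := by
      apply Finset.orderEmbOfFin_unique hcard _ (hqmono (U T))
      intro x
      simp [hΨ]
    have h2 : q (U T') = (Ψ T).orderEmbOfFin hcard := by
      apply Finset.orderEmbOfFin_unique hcard _ (hqmono (U T'))
      intro x
      rw [hEq]
      simp [hΨ]
    rw [h1, h2]
  calc G.card ≤ (Finset.powersetCard m (Finset.range (L + m))).card := by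
        apply Finset.card_le_card_of_injOn Ψ hmem hinjΨ
    _ = (L + m).choose m := by
        rw [Finset.card_powersetCard, Finset.card_range]

lemma sum_sq_powerset {n : ℕ} (S : Finset (Fin n)) (a : Fin n → ℤ) :
    ∑ T ∈ S.powerset, (2 * ∑ j ∈ T, a j - ∑ j ∈ S, a j) ^ 2
      = 2 ^ S.card * ∑ j ∈ S, (a j) ^ 2 := by
  classical
  induction S using Finset.induction_on with
  | empty => simp
  | @insert j S hj ih =>
    rw [Finset.sum_powerset_insert hj]
    rw [Finset.sum_insert hj, Finset.sum_insert hj, Finset.card_insert_of_notMem hj]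
    have h1 : ∀ T ∈ S.powerset,
        (2 * ∑ i ∈ T, a i - (a j + ∑ i ∈ S, a i)) ^ 2
          = (2 * ∑ i ∈ T, a i - ∑ i ∈ S, a i) ^ 2
            - 2 * a j * (2 * ∑ i ∈ T, a i - ∑ i ∈ S, a i) + (a j)^2 := by
      intro T hT; ring
    have h2 : ∀ T ∈ S.powerset,
        (2 * ∑ i ∈ insert j T, a i - (a j + ∑ i ∈ S, a i)) ^ 2
          = (2 * ∑ i ∈ T, a i - ∑ i ∈ S, a i) ^ 2
            + 2 * a j * (2 * ∑ i ∈ T, a i - ∑ i ∈ S, a i) + (a j)^2 := by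
      intro T hT
      have hjT : j ∉ T := fun h => hj (Finset.mem_powerset.mp hT h)
      rw [Finset.sum_insert hjT]
      ring
    rw [Finset.sum_congr rfl h1, Finset.sum_congr rfl h2]
    simp only [Finset.sum_add_distrib, Finset.sum_sub_distrib, Finset.sum_const,
      Finset.card_powerset, ih]
    ring

def encZ : ℤ → ℕ := fun k => if 0 ≤ k then (2*k).toNat else (-2*k-1).toNat

lemma encZ_inj : Function.Injective encZ := by
  intro a b h
  simp only [encZ] at h
  split_ifs at h <;> omega

lemma encZ_le (k : ℤ) : encZ k ≤ 2 * k.natAbs + 1 := by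
  simp only [encZ]
  split_ifs <;> omega

theorem vertex_is_integer {m n : ℕ} (A : Matrix (Fin m) (Fin n) ℤ) (b : Fin m → ℤ)
    (v : Fin n → ℝ) (hv : IsVertex (integerHull A b) v) :
    ∃ z : Fin n → ℤ, (∀ i, 0 ≤ z i) ∧ A.mulVec z = b ∧ v = fun i => (z i : ℝ) := by
  classical
  set S₀ : Set (Fin n → ℝ) :=
    {x | ∃ z : Fin n → ℤ, (∀ i, 0 ≤ z i) ∧ A.mulVec z = b ∧ x = fun i => (z i : ℝ)} with hS₀
  by_contra hvn
  have hsub : S₀ ⊆ integerHull A b \ {v} := by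
    intro x hx
    refine ⟨subset_convexHull ℝ _ hx, ?_⟩
    intro hxv
    simp only [Set.mem_singleton_iff] at hxv
    exact hvn (hxv ▸ hx)
  exact hv.2 (convexHull_mono hsub hv.1)

theorem D_injective {m n : ℕ} (A : Matrix (Fin m) (Fin n) ℤ) (b : Fin m → ℤ)
    (v : Fin n → ℝ) (hv : IsVertex (integerHull A b) v)
    (z : Fin n → ℤ) (hz0 : ∀ i, 0 ≤ z i) (hzb : A.mulVec z = b)
    (hvz : v = fun i => (z i : ℝ))
    (S : Finset (Fin n)) (hS : S = Finset.univ.filter (fun j => z j ≠ 0)) :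
    Set.InjOn (fun T : Finset (Fin n) => (fun i => 2 * ∑ j ∈ T, A i j - ∑ j ∈ S, A i j : Fin m → ℤ))
      S.powerset := by
  classical
  intro T hT U hU hEq
  by_contra hne
  rw [Finset.mem_coe, Finset.mem_powerset] at hT hU
  set d : Fin n → ℤ := fun j => (if j ∈ T then 1 else 0) - (if j ∈ U then 1 else 0) with hd
  have hsum : ∀ i, ∑ j ∈ T, A i j = ∑ j ∈ U, A i j := by
    intro i
    have := congrFun hEq i
    simp only at this
    omega
  have hAd : ∀ i, ∑ j, A i j * d j = 0 := by
    intro i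
    have h1 : ∀ (W : Finset (Fin n)), ∑ j, A i j * (if j ∈ W then (1:ℤ) else 0) = ∑ j ∈ W, A i j := by
      intro W
      simp only [mul_ite, mul_one, mul_zero, Finset.sum_ite_mem, Finset.univ_inter]
    simp only [hd, mul_sub]
    rw [Finset.sum_sub_distrib, h1 T, h1 U, hsum i, sub_self]
  have hdS : ∀ j, j ∉ S → d j = 0 := by
    intro j hj
    have h1 : j ∉ T := fun h => hj (hT h)
    have h2 : j ∉ U := fun h => hj (hU h)
    simp [hd, h1, h2]
  have hne' : ∃ j, d j ≠ 0 := by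
    by_contra hall
    push_neg at hall
    apply hne
    ext j
    have := hall j
    simp only [hd] at this
    constructor <;> intro hmem <;> by_contra hnot <;> simp [hmem, hnot] at this
  have hz1 : ∀ j, 1 ≤ z j ∨ d j = 0 := by
    intro j
    by_cases hjS : j ∈ S
    · left
      rw [hS] at hjS
      simp only [Finset.mem_filter] at hjS
      have := hz0 j
      omega
    · right; exact hdS j hjS
  have key : ∀ (e : ℤ), e = 1 ∨ e = -1 →
      (fun x => (((z x) + e * d x : ℤ) : ℝ)) ∈ integerHull A b \ {v} := by
    intro e he
    constructor
    · apply subset_convexHull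
      refine ⟨fun x => z x + e * d x, ?_, ?_, rfl⟩
      · intro j
        show 0 ≤ z j + e * d j
        rcases hz1 j with h | h
        · have : d j = 1 ∨ d j = 0 ∨ d j = -1 := by
            simp only [hd]
            split_ifs <;> omega
          rcases he with rfl | rfl <;> rcases this with h' | h' | h' <;> rw [h'] <;> omega
        · rw [h]; simpa using hz0 j
      · funext i
        have : A.mulVec (fun x => z x + e * d x) i = A.mulVec z i + e * ∑ j, A i j * d j := by
          simp only [Matrix.mulVec, dotProduct, Finset.mul_sum, mul_add]
          rw [Finset.sum_add_distrib]
          congr 1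
          apply Finset.sum_congr rfl
          intro j _
          ring
        rw [this, hAd, hzb]
        ring
    · simp only [Set.mem_singleton_iff]
      intro hcontra
      obtain ⟨j, hj⟩ := hne'
      have := congrFun hcontra j
      rw [hvz] at this
      simp only at this
      have : (z j : ℝ) + e * d j = z j := by exact_mod_cast this
      have he' : (e : ℝ) ≠ 0 := by rcases he with rfl | rfl <;> norm_num
      have : (d j : ℝ) = 0 := by
        have h2 : (e : ℝ) * d j = 0 := by linarith
        exact (mul_eq_zero.mp h2).resolve_left he'
      exact hj (by exact_mod_cast this)
  apply hv.2
  have h1 := key 1 (Or.inl rfl)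
  have h2 := key (-1) (Or.inr rfl)
  have hconv : Convex ℝ (convexHull ℝ (integerHull A b \ {v})) := convex_convexHull ℝ _
  have hmem1 := subset_convexHull ℝ _ h1
  have hmem2 := subset_convexHull ℝ _ h2
  have hmid := hconv hmem1 hmem2 (by norm_num : (0:ℝ) ≤ 1/2) (by norm_num : (0:ℝ) ≤ 1/2)
    (by norm_num)
  convert hmid using 1
  funext j
  rw [hvz]
  simp only [Pi.add_apply, Pi.smul_apply, smul_eq_mul]
  push_cast
  ring

end Stmt13Aux

set_option maxHeartbeats 2000000 in
theorem stmt13 {m n : ℕ} (A : Matrix (Fin m) (Fin n) ℤ) (b : Fin m → ℤ)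
    (v : Fin n → ℝ) (hv : IsVertex (integerHull A b) v)
    (s : ℕ) (hs : s = (Function.support v).ncard)
    (Δ : ℕ) (hΔ : Δ = Finset.univ.sup fun p : Fin m × Fin n => (A p.1 p.2).natAbs) :
    (s : ℝ) ≤
      m * Real.logb 2 (4.24 * Real.exp 1 * Real.sqrt s * Δ + 2 * Real.exp 1) := by
  classical
  open Stmt13Aux in
  obtain ⟨z, hz0, hzb, hvz⟩ := Stmt13Aux.vertex_is_integer A b v hv
  set S : Finset (Fin n) := Finset.univ.filter (fun j => z j ≠ 0) with hSdef
  have hscard : s = S.card := by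
    rw [hs, hvz]
    have hsupp : Function.support (fun i => ((z i : ℝ))) = ↑S := by
      ext j
      simp [hSdef, Function.mem_support]
    rw [hsupp, Set.ncard_coe_finset]
  set D : Finset (Fin n) → Fin m → ℤ :=
    fun T i => 2 * ∑ j ∈ T, A i j - ∑ j ∈ S, A i j with hD
  have hDinj : Set.InjOn D (S.powerset : Finset (Finset (Fin n))) :=
    Stmt13Aux.D_injective A b v hv z hz0 hzb hvz S hSdef
  have hAbs : ∀ i j, (A i j).natAbs ≤ Δ := by
    intro i j
    rw [hΔ]
    exact Finset.le_sup (f := fun p : Fin m × Fin n => (A p.1 p.2).natAbs) (Finset.mem_univ (i, j))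
  have hE : (2.7182818 : ℝ) < Real.exp 1 := by
    have := Real.exp_one_gt_d9
    norm_num at this ⊢
    linarith
  have hEpos : (0 : ℝ) < Real.exp 1 := Real.exp_pos 1
  set E := Real.exp 1 with hEdef
  set B : ℝ := 4.24 * E * Real.sqrt s * Δ + 2 * E with hBdef
  -- trivial case s = 0
  by_cases hs0 : s = 0
  · subst hs0
    have hB1 : (1 : ℝ) ≤ B := by
      rw [hBdef]
      have : (0:ℝ) ≤ 4.24 * E * Real.sqrt 0 * Δ := by positivity
      push_cast
      nlinarith
    have : 0 ≤ Real.logb 2 B := Real.logb_nonneg (by norm_num) hB1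
    push_cast
    positivity
  have hs1 : 1 ≤ s := Nat.one_le_iff_ne_zero.mpr hs0
  have hSne : S.Nonempty := by
    rw [← Finset.card_pos, ← hscard]; omega
  -- m ≥ 1 and Δ ≥ 1
  have hm1 : 1 ≤ m := by
    by_contra h
    have hm0 : m = 0 := by omega
    have : (∅ : Finset (Fin n)) = S := by
      apply hDinj (by simp) (by simp [Finset.mem_powerset])
      subst hm0
      funext i
      exact i.elim0
    exact absurd this.symm (Finset.nonempty_iff_ne_empty.mp hSne)
  have hΔ1 : 1 ≤ Δ := by
    by_contra h
    have hΔ0 : ∀ i j, A i j = 0 := by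
      intro i j
      have := hAbs i j
      omega
    have : (∅ : Finset (Fin n)) = S := by
      apply hDinj (by simp) (by simp [Finset.mem_powerset])
      funext i
      simp only [hD]
      simp [hΔ0]
    exact absurd this.symm (Finset.nonempty_iff_ne_empty.mp hSne)
  -- basic real facts
  have hsqrt1 : (1 : ℝ) ≤ Real.sqrt s := by
    rw [show (1:ℝ) = Real.sqrt 1 from (Real.sqrt_one).symm]
    apply Real.sqrt_le_sqrt
    exact_mod_cast hs1
  have hΔR : (1 : ℝ) ≤ (Δ : ℝ) := by exact_mod_cast hΔ1
  set Xr : ℝ := Real.sqrt s * Δ with hXrdef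
  have hXr1 : (1 : ℝ) ≤ Xr := by
    rw [hXrdef]
    nlinarith
  have hBX : B = 4.24 * E * Xr + 2 * E := by rw [hBdef, hXrdef]; ring
  have hBpos : (0 : ℝ) < B := by rw [hBX]; nlinarith
  have hB2 : (16 : ℝ) ≤ B := by rw [hBX]; nlinarith
  -- row-wise sum bound
  have hrow : ∀ i : Fin m, ∑ T ∈ S.powerset, (((D T i).natAbs : ℝ))
      ≤ 2 ^ s * (Real.sqrt s * Δ) := by
    intro i
    set g : Finset (Fin n) → ℝ := fun T => ((D T i).natAbs : ℝ) with hg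
    have hgnn : ∀ T, 0 ≤ g T := fun T => by positivity
    have hsq : ∑ T ∈ S.powerset, g T ^ 2 = (2:ℝ) ^ s * ∑ j ∈ S, ((A i j : ℝ)) ^ 2 := by
      have hZ := Stmt13Aux.sum_sq_powerset S (fun j => A i j)
      have : ∀ T, g T ^ 2 = (((2 * ∑ j ∈ T, A i j - ∑ j ∈ S, A i j) ^ 2 : ℤ) : ℝ) := by
        intro T
        rw [hg]
        push_cast [Nat.cast_natAbs]
        rw [sq_abs]
        simp [hD]
      rw [Finset.sum_congr rfl (fun T _ => this T), ← Int.cast_sum, hZ]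
      push_cast [hscard]
      ring
    have hA2 : ∑ j ∈ S, ((A i j : ℝ)) ^ 2 ≤ (s : ℝ) * (Δ : ℝ) ^ 2 := by
      have : ∀ j ∈ S, ((A i j : ℝ)) ^ 2 ≤ (Δ : ℝ) ^ 2 := by
        intro j _
        have h1 : |(A i j : ℝ)| ≤ (Δ : ℝ) := by
          rw [← Int.cast_abs]
          have : |A i j| ≤ (Δ : ℤ) := by
            rw [Int.abs_eq_natAbs]
            exact_mod_cast hAbs i j
          exact_mod_cast this
        nlinarith [abs_nonneg (A i j : ℝ), sq_abs (A i j : ℝ)]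
      calc ∑ j ∈ S, ((A i j : ℝ)) ^ 2 ≤ ∑ j ∈ S, (Δ : ℝ) ^ 2 := Finset.sum_le_sum this
        _ = (S.card : ℝ) * (Δ : ℝ) ^ 2 := by rw [Finset.sum_const]; ring
        _ = (s : ℝ) * (Δ : ℝ) ^ 2 := by rw [hscard]
    have hCS : (∑ T ∈ S.powerset, g T) ^ 2
        ≤ (∑ T ∈ S.powerset, (1:ℝ) ^ 2) * ∑ T ∈ S.powerset, g T ^ 2 := by
      have := Finset.sum_mul_sq_le_sq_mul_sq S.powerset (fun _ => (1:ℝ)) g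
      simpa using this
    have hcard : (∑ T ∈ S.powerset, (1:ℝ) ^ 2) = (2:ℝ) ^ s := by
      simp [Finset.card_powerset, hscard]
    have hfin : (∑ T ∈ S.powerset, g T) ^ 2 ≤ ((2:ℝ) ^ s * (Real.sqrt s * Δ)) ^ 2 := by
      have h1 : (∑ T ∈ S.powerset, g T) ^ 2 ≤ (2:ℝ)^s * ((2:ℝ)^s * ((s:ℝ) * (Δ:ℝ)^2)) := by
        rw [hcard] at hCS
        have h2 : ∑ T ∈ S.powerset, g T ^ 2 ≤ (2:ℝ)^s * ((s:ℝ) * (Δ:ℝ)^2) := by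
          rw [hsq]
          apply mul_le_mul_of_nonneg_left hA2 (by positivity)
        calc (∑ T ∈ S.powerset, g T) ^ 2 ≤ (2:ℝ)^s * ∑ T ∈ S.powerset, g T ^ 2 := hCS
          _ ≤ (2:ℝ)^s * ((2:ℝ)^s * ((s:ℝ) * (Δ:ℝ)^2)) := by
              apply mul_le_mul_of_nonneg_left h2 (by positivity)
      have h3 : (2:ℝ)^s * ((2:ℝ)^s * ((s:ℝ) * (Δ:ℝ)^2)) = ((2:ℝ) ^ s * (Real.sqrt s * Δ)) ^ 2 := by
        rw [mul_pow, mul_pow, Real.sq_sqrt (by positivity : (0:ℝ) ≤ (s:ℝ))]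
        ring
      linarith
    have hnn : 0 ≤ ∑ T ∈ S.powerset, g T := Finset.sum_nonneg (fun T _ => hgnn T)
    have hnn2 : (0:ℝ) ≤ 2 ^ s * (Real.sqrt s * Δ) := by positivity
    nlinarith
  -- Markov
  set R : ℝ := 2 * m * (Real.sqrt s * Δ) with hRdef
  have hR0 : (0 : ℝ) ≤ R := by rw [hRdef]; positivity
  set f : Finset (Fin n) → ℝ := fun T => ∑ i, ((D T i).natAbs : ℝ) with hf
  have hfnn : ∀ T, 0 ≤ f T := fun T => Finset.sum_nonneg (fun i _ => by positivity)
  have htotal : ∑ T ∈ S.powerset, f T ≤ 2 ^ s * ((m:ℝ) * (Real.sqrt s * Δ)) := by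
    rw [hf]
    rw [Finset.sum_comm]
    calc ∑ i : Fin m, ∑ T ∈ S.powerset, (((D T i).natAbs : ℝ))
        ≤ ∑ i : Fin m, (2:ℝ) ^ s * (Real.sqrt s * Δ) := Finset.sum_le_sum (fun i _ => hrow i)
      _ = (m:ℝ) * ((2:ℝ)^s * (Real.sqrt s * Δ)) := by
            rw [Finset.sum_const, Finset.card_univ, Fintype.card_fin, nsmul_eq_mul]
      _ = 2 ^ s * ((m:ℝ) * (Real.sqrt s * Δ)) := by ring
  set Gset : Finset (Finset (Fin n)) := S.powerset.filter (fun T => f T ≤ R) with hGdef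
  have hGcard : 2 ^ (s-1) ≤ Gset.card := by
    set Bad : Finset (Finset (Fin n)) := S.powerset.filter (fun T => ¬ (f T ≤ R)) with hBaddef
    have hsplit : Gset.card + Bad.card = 2 ^ s := by
      rw [hGdef, hBaddef, Finset.card_filter_add_card_filter_not,
        Finset.card_powerset, ← hscard]
    have hbad : (Bad.card : ℝ) * R ≤ 2 ^ s * ((m:ℝ) * (Real.sqrt s * Δ)) := by
      have h1 : Bad.card • R ≤ ∑ T ∈ Bad, f T := by
        apply Finset.card_nsmul_le_sum
        intro T hT
        rw [hBaddef, Finset.mem_filter] at hT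
        exact le_of_lt (lt_of_not_ge hT.2)
      have h2 : ∑ T ∈ Bad, f T ≤ ∑ T ∈ S.powerset, f T := by
        apply Finset.sum_le_sum_of_subset_of_nonneg (Finset.filter_subset _ _)
        intro T _ _
        exact hfnn T
      rw [nsmul_eq_mul] at h1
      linarith
    have hRpos : (0 : ℝ) < R := by
      rw [hRdef]
      have : (1:ℝ) ≤ (m:ℝ) := by exact_mod_cast hm1
      nlinarith
    have hbadcard : (Bad.card : ℝ) ≤ 2 ^ (s-1) := by
      have hhalf : 2 ^ s * ((m:ℝ) * (Real.sqrt s * Δ)) = 2 ^ s * (R / 2) := by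
        rw [hRdef]; ring
      rw [hhalf] at hbad
      have h4 : (Bad.card : ℝ) ≤ 2 ^ s / 2 := by
        have h6 : (Bad.card : ℝ) * R ≤ (2 ^ s / 2) * R := by
          rw [show (2:ℝ)^s * (R/2) = (2^s/2)*R by ring] at hbad
          exact hbad
        exact le_of_mul_le_mul_right h6 hRpos
      have h5 : (2:ℝ) ^ s / 2 = 2 ^ (s - 1) := by
        have h := Nat.sub_add_cancel hs1
        calc (2:ℝ)^s / 2 = (2:ℝ)^(s-1+1) / 2 := by rw [h]
          _ = 2^(s-1) := by rw [pow_succ]; field_simp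
      linarith [h4, h5.symm.le]
    have hbadnat : Bad.card ≤ 2 ^ (s-1) := by
      exact_mod_cast hbadcard.trans (by norm_num : ((2:ℝ)^(s-1)) ≤ ((2^(s-1) : ℕ) : ℝ))
    have h2s : 2 ^ (s-1) + 2 ^ (s-1) = 2 ^ s := by
      have h := Nat.sub_add_cancel hs1
      calc 2^(s-1)+2^(s-1) = 2^(s-1)*2 := by ring
        _ = 2^(s-1+1) := (pow_succ 2 (s-1)).symm
        _ = 2^s := by rw [h]
    omega
  -- counting
  set c : Fin m → ℤ := fun i => if Even (∑ j ∈ S, A i j) then 0 else 1 with hc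
  have hc01 : ∀ i, c i = 0 ∨ c i = 1 := by
    intro i
    simp only [hc]
    split_ifs <;> simp
  have hparity : ∀ T i, (D T i - c i) % 2 = 0 := by
    intro T i
    simp only [hD, hc]
    rcases Int.even_or_odd (∑ j ∈ S, A i j) with he | ho
    · rw [if_pos he]
      obtain ⟨k, hk⟩ := he
      omega
    · rw [if_neg (Int.not_even_iff_odd.mpr ho)]
      obtain ⟨k, hk⟩ := ho
      omega
  set U : Finset (Fin n) → Fin m → ℕ := fun T i => Stmt13Aux.encZ ((D T i - c i) / 2) with hU
  set L : ℕ := Nat.floor R + 2 * m with hL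
  have hUinj : Set.InjOn U Gset := by
    intro T hT T' hT' hEq
    have hTp : T ∈ (S.powerset : Finset (Finset (Fin n))) :=
      (Finset.mem_filter.mp (Finset.mem_coe.mp hT)).1
    have hT'p : T' ∈ (S.powerset : Finset (Finset (Fin n))) :=
      (Finset.mem_filter.mp (Finset.mem_coe.mp hT')).1
    apply hDinj (Finset.mem_coe.mpr hTp) (Finset.mem_coe.mpr hT'p)
    funext i
    have h1 : Stmt13Aux.encZ ((D T i - c i) / 2) = Stmt13Aux.encZ ((D T' i - c i) / 2) :=
      congrFun hEq i
    have h2 := Stmt13Aux.encZ_inj h1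
    have hp1 := hparity T i
    have hp2 := hparity T' i
    omega
  have hUsum : ∀ T ∈ Gset, ∑ i, U T i ≤ L := by
    intro T hT
    have hmem := hT
    rw [hGdef, Finset.mem_filter] at hmem
    have hfT : f T ≤ R := hmem.2
    have h1 : ∀ i, U T i ≤ (D T i).natAbs + 2 := by
      intro i
      have he := Stmt13Aux.encZ_le ((D T i - c i) / 2)
      have hp := hparity T i
      have hci := hc01 i
      have : 2 * ((D T i - c i) / 2).natAbs ≤ (D T i).natAbs + 1 := by
        rcases hci with h | h <;> omega
      simp only [hU]
      omega
    have h2 : ∑ i, U T i ≤ (∑ i, (D T i).natAbs) + 2 * m := by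
      calc ∑ i, U T i ≤ ∑ i : Fin m, ((D T i).natAbs + 2) := Finset.sum_le_sum (fun i _ => h1 i)
        _ = (∑ i, (D T i).natAbs) + 2 * m := by
            rw [Finset.sum_add_distrib, Finset.sum_const]
            simp [mul_comm]
    have h3 : (∑ i, (D T i).natAbs) ≤ Nat.floor R := by
      rw [Nat.le_floor_iff hR0]
      calc ((∑ i, (D T i).natAbs : ℕ) : ℝ) = ∑ i, (((D T i).natAbs : ℝ)) := by push_cast; rfl
        _ = f T := by rw [hf]
        _ ≤ R := hfT
    rw [hL]
    omega
  have hGchoose : Gset.card ≤ (L + m).choose m :=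
    Stmt13Aux.card_le_choose_of_sum_le Gset m L U hUinj hUsum
  have hmain : (2:ℕ) ^ (s-1) ≤ (L + m).choose m := le_trans hGcard hGchoose
  -- endgame
  have hfloorR : ((Nat.floor R : ℕ) : ℝ) ≤ R := Nat.floor_le hR0
  have hmR : (1:ℝ) ≤ (m:ℝ) := by exact_mod_cast hm1
  have hlog2s : Real.logb 2 ((2:ℝ)^s) = s := by
    rw [Real.logb_pow, Real.logb_self_eq_one (by norm_num)]
    ring
  have conclude : ((2:ℝ)^s ≤ B ^ m) → (s:ℝ) ≤ (m:ℝ) * Real.logb 2 B := by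
    intro h
    have h1 : Real.logb 2 ((2:ℝ)^s) ≤ Real.logb 2 (B ^ m) :=
      (Real.logb_le_logb (by norm_num) (by positivity) (by positivity)).mpr h
    rw [hlog2s, Real.logb_pow] at h1
    exact h1
  show (s:ℝ) ≤ (m:ℝ) * Real.logb 2 B
  have hcast : ((2:ℕ)^(s-1) : ℝ) ≤ ((L+m).choose m : ℝ) := by exact_mod_cast hmain
  have h2split : (2:ℝ)^s = 2 * (2:ℝ)^(s-1) := by
    have h := Nat.sub_add_cancel hs1
    calc (2:ℝ)^s = (2:ℝ)^(s-1+1) := by rw [h]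
      _ = 2 * (2:ℝ)^(s-1) := by rw [pow_succ]; ring
  have h2s1cast : ((2:ℕ)^(s-1) : ℝ) = (2:ℝ)^(s-1) := by push_cast; rfl
  -- trivial regime s ≤ 4m
  by_cases hstriv : s ≤ 4*m
  · have h16log : Real.logb 2 (16:ℝ) = 4 := by
      rw [show (16:ℝ) = 2^(4:ℕ) by norm_num, Real.logb_pow, Real.logb_self_eq_one (by norm_num)]
      norm_num
    have hlogB : (4:ℝ) ≤ Real.logb 2 B := by
      rw [← h16log]
      exact (Real.logb_le_logb (by norm_num) (by norm_num) hBpos).mpr hB2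
    have hs4m : (s:ℝ) ≤ 4*(m:ℝ) := by exact_mod_cast hstriv
    nlinarith
  rcases eq_or_lt_of_le hm1 with hm1' | hm2
  · -- m = 1
    have hm : m = 1 := hm1'.symm
    subst hm
    have hch : ((L+1).choose 1 : ℝ) = (L:ℝ) + 1 := by
      rw [Nat.choose_one_right]
      push_cast
      ring
    have hLR : (L:ℝ) ≤ R + 2 := by
      rw [hL]
      push_cast
      linarith [hfloorR]
    have hR' : R = 2*Xr := by rw [hRdef]; push_cast; ring
    have hBfin : (2:ℝ)^s ≤ B := by
      have h1 : (2:ℝ)^(s-1) ≤ (L:ℝ) + 1 := by rw [← h2s1cast, ← hch]; exact hcast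
      have h2 : (2:ℝ)^s ≤ 2*((L:ℝ)+1) := by rw [h2split]; linarith
      have h3 : (2:ℝ)^s ≤ 2*R + 6 := by linarith
      rw [hBX]
      rw [hR'] at h3
      nlinarith [hE, hXr1, hEpos]
    exact conclude (by rw [pow_one]; exact hBfin)
  · -- m ≥ 2
    have hm2' : 2 ≤ m := hm2
    have hs9 : 9 ≤ s := by omega
    have hsqrt3 : (3:ℝ) ≤ Real.sqrt s := by
      rw [show (3:ℝ) = Real.sqrt 9 by rw [show (9:ℝ) = 3^2 by norm_num, Real.sqrt_sq (by norm_num)]]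
      exact Real.sqrt_le_sqrt (by exact_mod_cast hs9)
    have hXr3 : (3:ℝ) ≤ Xr := by rw [hXrdef]; nlinarith
    have hchoose : ((L+m).choose m : ℝ) ≤ (E * (L+m : ℕ) / m)^m := by
      rw [hEdef]
      exact Stmt13Aux.choose_le_pow_real (L+m) m
    have hmpos : (0:ℝ) < (m:ℝ) := by linarith
    have hquot : E * ((L+m : ℕ):ℝ) / m ≤ 2*E*Xr + 3*E := by
      rw [div_le_iff₀ hmpos]
      have hLm : ((L+m : ℕ):ℝ) ≤ R + 3*m := by
        rw [hL]
        push_cast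
        linarith [hfloorR]
      have : E * ((L+m : ℕ):ℝ) ≤ E * (R + 3*m) := by
        apply mul_le_mul_of_nonneg_left hLm (le_of_lt hEpos)
      have hRe : E * (R + 3*(m:ℝ)) = (2*E*Xr + 3*E)*m := by
        rw [hRdef, hXrdef]
        ring
      linarith
    have hpow : ((L+m).choose m : ℝ) ≤ (2*E*Xr + 3*E)^m := by
      calc ((L+m).choose m : ℝ) ≤ (E * (L+m : ℕ) / m)^m := hchoose
        _ ≤ (2*E*Xr + 3*E)^m := by
            apply pow_le_pow_left₀ (by positivity) hquot
    have h2 : (2:ℝ)^s ≤ 2 * (2*E*Xr+3*E)^m := by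
      rw [h2split]
      have := hcast
      rw [h2s1cast] at this
      nlinarith [this, hpow]
    have hsqrt2 : Real.sqrt 2 ≤ 1.4142136 := by
      rw [show (1.4142136:ℝ) = Real.sqrt (1.4142136^2) by rw [Real.sqrt_sq (by norm_num)]]
      exact Real.sqrt_le_sqrt (by norm_num)
    have hsqrt2' : (1:ℝ) ≤ Real.sqrt 2 := by
      have h := Real.sqrt_le_sqrt (by norm_num : (1:ℝ) ≤ 2)
      rwa [Real.sqrt_one] at h
    have h2le : (2:ℝ) ≤ Real.sqrt 2 ^ m := by
      have hsq : Real.sqrt 2 ^ 2 = 2 := Real.sq_sqrt (by norm_num)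
      calc (2:ℝ) = Real.sqrt 2 ^ 2 := hsq.symm
        _ ≤ Real.sqrt 2 ^ m := pow_le_pow_right₀ hsqrt2' hm2'
    have hkey : Real.sqrt 2 * (2*E*Xr+3*E) ≤ B := by
      rw [hBX]
      have hEXr : 3*E ≤ E*Xr := by nlinarith [hXr3, hEpos]
      nlinarith [hsqrt2, hEpos, hXr3, mul_le_mul_of_nonneg_right hsqrt2
        (by nlinarith [hEpos, hXr3] : (0:ℝ) ≤ 2*E*Xr+3*E), mul_le_mul_of_nonneg_left hXr3 hEpos.le]
    have hBm : (2:ℝ)^s ≤ B^m := by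
      calc (2:ℝ)^s ≤ 2 * (2*E*Xr+3*E)^m := h2
        _ ≤ Real.sqrt 2 ^ m * (2*E*Xr+3*E)^m := by
            apply mul_le_mul_of_nonneg_right h2le (by positivity)
        _ = (Real.sqrt 2 * (2*E*Xr+3*E))^m := (mul_pow _ _ _).symm
        _ ≤ B^m := by
            apply pow_le_pow_left₀ (by positivity) hkey
    exact conclude hBm
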